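/- Let Γ be a groupoid. For each n ≥ 0, there is a bijection between the set of strings of n composable morphisms in the loop groupoid ΛΓ (i.e. n-simplices of the nerve of ΛΓ) and the set of loops of n+1 composable morphisms in Γ, i.e. tuples (x₀ →^{φ₀} x₁ → ⋯ → xₙ →^{ψ} x₀) of morphisms in Γ. Moreover, this bijection is compatible with face and degeneracy maps, giving an isomorphism of simplicial sets from the nerve of ΛΓ to the cyclic bar construction of Γ. -/

import Mathlib

open CategoryTheory

universe v u

variable (Γ : Type u) [Groupoid.{v} Γ]

/-- The loop groupoid `ΛΓ` of a groupoid `Γ`: objects are pairs `(x, α)` of an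
object `x` of `Γ` and an automorphism `α` of `x`; morphisms
`(x, α) → (x', α')` are morphisms `f : x → x'` of `Γ` with `α ≫ f = f ≫ α'`. -/
structure LoopObj where
  pt : Γ
  aut : pt ⟶ pt

instance LoopObj.category : Category (LoopObj Γ) where
  Hom x y := { f : x.pt ⟶ y.pt // x.aut ≫ f = f ≫ y.aut }
  id x := ⟨𝟙 x.pt, by simp⟩
  comp {a b c} f g := ⟨f.1 ≫ g.1, by
    rw [← Category.assoc, f.2, Category.assoc, g.2, Category.assoc]⟩
  id_comp f := Subtype.ext (by simp)
  comp_id f := Subtype.ext (by simp)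
  assoc f g h := Subtype.ext (by simp)

/-- The forgetful functor `ΛΓ ⥤ Γ`. -/
def forgetLoop : LoopObj Γ ⥤ Γ where
  obj x := x.pt
  map f := f.1

/-- The set of `n`-simplices of the cyclic bar construction of `Γ`: a string of
`n` composable morphisms `x₀ → x₁ → ⋯ → xₙ` in `Γ` together with a loop-back
morphism `ψ : xₙ → x₀`. -/
def CycBarObj (n : ℕ) : Type (max u v) :=
  Σ' F : ComposableArrows Γ n, F.obj (Fin.last n) ⟶ F.obj 0

/-- The simplicial structure maps of the cyclic bar construction of `Γ`. -/
def cycBarMap {m n : ℕ} (f : SimplexCategory.mk m ⟶ SimplexCategory.mk n)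
    (x : CycBarObj Γ n) : CycBarObj Γ m :=
  ⟨x.1.whiskerLeft (SimplexCategory.toCat.map f).toFunctor,
    x.1.map (homOfLE (Fin.le_last ((SimplexCategory.toCat.map f).toFunctor.obj (Fin.last m)))) ≫
      x.2 ≫ x.1.map (homOfLE (Fin.zero_le ((SimplexCategory.toCat.map f).toFunctor.obj (Fin.mk 0 (Nat.succ_pos m)))))⟩

variable {Γ}

@[simp] lemma LoopObj.comp_fst {X Y Z : LoopObj Γ} (f : X ⟶ Y) (g : Y ⟶ Z) :
    (f ≫ g).1 = f.1 ≫ g.1 := rfl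

lemma LoopObj.eqToHom_fst {X Y : LoopObj Γ} (h : X = Y) :
    (eqToHom h).1 = eqToHom (congrArg LoopObj.pt h) := by subst h; rfl

noncomputable def eFun {n : ℕ} (F : ComposableArrows (LoopObj Γ) n) : CycBarObj Γ n :=
  ⟨F ⋙ forgetLoop Γ,
    inv ((F ⋙ forgetLoop Γ).map (homOfLE (Fin.zero_le (Fin.last n)))) ≫ (F.obj 0).aut⟩

def eInv {n : ℕ} (y : CycBarObj Γ n) : ComposableArrows (LoopObj Γ) n where
  obj i := ⟨y.1.obj i, y.1.map (homOfLE (Fin.le_last i)) ≫ y.2 ≫ y.1.map (homOfLE (Fin.zero_le i))⟩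
  map {i j} g := ⟨y.1.map g, by
    dsimp
    have h1 : y.1.map (homOfLE (Fin.zero_le i)) ≫ y.1.map g
        = y.1.map (homOfLE (Fin.zero_le j)) := by
      rw [← Functor.map_comp]; congr 1
    have h2 : y.1.map g ≫ y.1.map (homOfLE (Fin.le_last j))
        = y.1.map (homOfLE (Fin.le_last i)) := by
      rw [← Functor.map_comp]; congr 1
    simp only [Category.assoc, h1, ← h2]⟩
  map_id i := Subtype.ext (show y.1.map (𝟙 i) = 𝟙 (y.1.obj i) from by simp)
  map_comp g h := Subtype.ext (show y.1.map _ = y.1.map _ ≫ y.1.map _ from by simp)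

lemma left_inv' {n : ℕ} (F : ComposableArrows (LoopObj Γ) n) : eInv (eFun F) = F := by
  have hobj : ∀ i, (eInv (eFun F)).obj i = F.obj i := fun i => by
    show LoopObj.mk _ _ = F.obj i
    have : (LoopObj.mk (F.obj i).pt (F.obj i).aut) = F.obj i := rfl
    rw [← this]
    congr 1
    dsimp [eFun, eInv, forgetLoop]
    have h1 : (F.map (homOfLE (Fin.zero_le (Fin.last n)))).1
        = (F.map (homOfLE (Fin.zero_le i))).1 ≫ (F.map (homOfLE (Fin.le_last i))).1 := by
      have : F.map (homOfLE (Fin.zero_le (Fin.last n)))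
          = F.map (homOfLE (Fin.zero_le i)) ≫ F.map (homOfLE (Fin.le_last i)) := by
        rw [← Functor.map_comp]; congr 1
      rw [this]; rfl
    have comm := (F.map (homOfLE (Fin.zero_le i))).2
    simp only [h1]
    simp [comm]
  refine CategoryTheory.Functor.ext hobj (fun i j g => ?_)
  apply Subtype.ext
  simp only [LoopObj.comp_fst, LoopObj.eqToHom_fst]
  simp [LoopObj.comp_fst, LoopObj.eqToHom_fst, eInv, eFun, forgetLoop]
  exact (Category.id_comp _).symm

lemma right_inv' {n : ℕ} (y : CycBarObj Γ n) : eFun (eInv y) = y := by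
  obtain ⟨G, ψ⟩ := y
  show (⟨G, inv (G.map (homOfLE (Fin.zero_le (Fin.last n))))
      ≫ (G.map (homOfLE (Fin.le_last (0 : Fin (n+1)))) ≫ ψ ≫ G.map (homOfLE (Fin.zero_le (0 : Fin (n+1)))))⟩ : CycBarObj Γ n) = ⟨G, ψ⟩
  refine congrArg (PSigma.mk G) ?_
  rw [show homOfLE (Fin.zero_le (0 : Fin (n+1))) = 𝟙 _ from rfl, G.map_id, Category.comp_id,
    show homOfLE (Fin.le_last (0 : Fin (n+1))) = homOfLE (Fin.zero_le (Fin.last n)) from rfl,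
    IsIso.inv_hom_id_assoc]

lemma loop_aux {a b c d : Γ} (p : a ⟶ b) (q : b ⟶ c) (r : c ⟶ d) (α : a ⟶ a) (β : b ⟶ b)
    (h : α ≫ p = p ≫ β) : inv q ≫ β = r ≫ (inv (p ≫ q ≫ r) ≫ α) ≫ p := by
  simp [reassoc_of% h]
  exact h.symm


/-- The nerve of the loop groupoid `ΛΓ` of a groupoid `Γ` is isomorphic, as a
simplicial set, to the cyclic bar construction of `Γ`: in each level there is a
bijection between strings of `n` composable morphisms in `ΛΓ` and loops of
`n + 1` composable morphisms in `Γ`, compatible with all simplicial structure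
maps, and identifying the underlying string of objects and morphisms via the
forgetful functor `ΛΓ ⥤ Γ`. -/
theorem nerve_loopGroupoid_iso_cyclicBar :
    ∃ e : ∀ n : ℕ,
        ((nerve (LoopObj Γ)).obj (Opposite.op (SimplexCategory.mk n))) ≃ CycBarObj Γ n,
      (∀ (n : ℕ) (x : (nerve (LoopObj Γ)).obj (Opposite.op (SimplexCategory.mk n))),
          (e n x).1 = x ⋙ forgetLoop Γ) ∧
      (∀ (m n : ℕ) (f : SimplexCategory.mk m ⟶ SimplexCategory.mk n)
          (x : (nerve (LoopObj Γ)).obj (Opposite.op (SimplexCategory.mk n))),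
        e m ((nerve (LoopObj Γ)).map f.op x) = cycBarMap Γ f (e n x)) := by
  refine ⟨fun n => ⟨eFun, eInv, left_inv', right_inv'⟩, fun n x => rfl, fun m n f x => ?_⟩
  let Φ : Fin (m+1) ⥤ Fin (n+1) := (SimplexCategory.toCat.map f).toFunctor
  let G : ComposableArrows Γ n := x ⋙ forgetLoop Γ
  let z : Fin (n+1) := Φ.obj ⟨0, Nat.succ_pos m⟩
  let w : Fin (n+1) := Φ.obj (Fin.last m)
  have hzw : z ≤ w := leOfHom (Φ.map (homOfLE (Fin.le_last (⟨0, Nat.succ_pos m⟩ : Fin (m+1)))))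
  show (⟨ComposableArrows.whiskerLeft G Φ, @inv _ _ _ _ (G.map (homOfLE hzw)) (IsIso.of_groupoid _) ≫ (x.obj z).aut⟩ : CycBarObj Γ m)
      = ⟨ComposableArrows.whiskerLeft G Φ,
          G.map (homOfLE (Fin.le_last w)) ≫
            (inv (G.map (homOfLE (Fin.zero_le (Fin.last n)))) ≫ (x.obj 0).aut)
              ≫ G.map (homOfLE (Fin.zero_le z))⟩
  refine congrArg (PSigma.mk (ComposableArrows.whiskerLeft G Φ)) ?_
  have comm := (x.map (homOfLE (Fin.zero_le z))).2
  have hsplit : G.map (homOfLE (Fin.zero_le (Fin.last n)))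
      = G.map (homOfLE (Fin.zero_le z)) ≫ G.map (homOfLE hzw) ≫ G.map (homOfLE (Fin.le_last w)) := by
    rw [← Functor.map_comp, ← Functor.map_comp]; congr 1
  simp only [hsplit]
  exact loop_aux (G.map (homOfLE (Fin.zero_le z))) (G.map (homOfLE hzw)) (G.map (homOfLE (Fin.le_last w))) _ _ comm
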